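/- In a cartesian monoidal category (tensor product is categorical product, unit is terminal object 1), a morphism u : U → 1 is a central idempotent if and only if U is subterminal, i.e. the unique map U → 1 is a monomorphism. -/

import Mathlib

open CategoryTheory MonoidalCategory

/-- A central idempotent in a monoidal category. -/
def IsCentralIdempotent {C : Type*} [Category C] [MonoidalCategory C]
    {U : C} (u : U ⟶ 𝟙_ C) : Prop :=
  (U ◁ u ≫ (ρ_ U).hom = u ▷ U ≫ (λ_ U).hom) ∧ IsIso (U ◁ u ≫ (ρ_ U).hom)

/-- In a cartesian monoidal category (tensor product the categorical product, unit the
terminal object), a morphism `u : U ⟶ 1` is a central idempotent if and only if `U` is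
subterminal, i.e. the (unique) map `U ⟶ 1` is a monomorphism. -/
theorem isCentralIdempotent_iff_mono {C : Type*} [Category C] [CartesianMonoidalCategory C]
    {U : C} (u : U ⟶ 𝟙_ C) :
    IsCentralIdempotent u ↔ Mono u := by
  open CartesianMonoidalCategory in
  have h1 : U ◁ u ≫ (ρ_ U).hom = fst U U := by
    rw [← Iso.eq_comp_inv]
    apply hom_ext
    · simp [toUnit_unique u (toUnit U)]
    · simpa using toUnit_unique _ _
  have h2 : u ▷ U ≫ (λ_ U).hom = snd U U := by
    rw [← Iso.eq_comp_inv]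
    apply hom_ext
    · simpa using toUnit_unique _ _
    · simp
  simp only [IsCentralIdempotent, h1, h2]
  constructor
  · rintro ⟨heq, _⟩
    refine ⟨fun f g _ => ?_⟩
    have := lift f g ≫= heq
    simpa using this
  · intro hm
    have heq : fst U U = snd U U :=
      (cancel_mono u).mp (toUnit_unique _ _)
    refine ⟨heq, ⟨lift (𝟙 U) (𝟙 U), ?_, by simp⟩⟩
    apply hom_ext <;> simp [← heq]
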